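/- Positive (semi)definiteness of the transition matrix: for every x ∈ ℝ³ with ‖x‖₂ ≤ π and every z ∈ ℝ³, zᵀ L_x z ≥ 0; moreover, if ‖x‖₂ < π and z ≠ 0, then zᵀ L_x z > 0. -/

import Mathlib

open Matrix Real

noncomputable section

/-- The skew-symmetric "hat" matrix of a vector in ℝ³. -/
def hatm (p : Fin 3 → ℝ) : Matrix (Fin 3) (Fin 3) ℝ :=
  !![0, -p 2, p 1; p 2, 0, -p 0; -p 1, p 0, 0]

/-- The Euclidean (ℓ²) norm on ℝ³. -/
def norm2 (p : Fin 3 → ℝ) : ℝ := Real.sqrt (∑ i, p i ^ 2)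

/-- The unnormalized sinc function: α · sinc α = sin α, sinc 0 = 1. -/
def sinc (α : ℝ) : ℝ := if α = 0 then 1 else Real.sin α / α

/-- c(θ) = sinc(θ)/sinc²(θ/2). -/
def cfun (θ : ℝ) : ℝ := _root_.sinc θ / _root_.sinc (θ / 2) ^ 2

/-- The symmetric part L¹ₓ of the transition matrix (L¹₀ := I₃). -/
def L1mat (x : Fin 3 → ℝ) : Matrix (Fin 3) (Fin 3) ℝ :=
  if x = 0 then 1 else
    cfun (norm2 x) • (1 : Matrix (Fin 3) (Fin 3) ℝ)
      + ((1 - cfun (norm2 x)) / norm2 x ^ 2) • vecMulVec x x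

/-- The transition matrix Lₓ of the axis-angle kinematics (L₀ := I₃). -/
def Lmat (x : Fin 3 → ℝ) : Matrix (Fin 3) (Fin 3) ℝ :=
  if x = 0 then 1 else
    cfun (norm2 x) • (1 : Matrix (Fin 3) (Fin 3) ℝ)
      + ((1 - cfun (norm2 x)) / norm2 x ^ 2) • vecMulVec x x
      + (1 / 2 : ℝ) • hatm x

lemma quad_expand (x z : Fin 3 → ℝ) (hx : x ≠ 0) :
    z ⬝ᵥ (Lmat x).mulVec z
      = cfun (norm2 x) * (∑ i, z i ^ 2)
        + ((1 - cfun (norm2 x)) / norm2 x ^ 2) * (∑ i, x i * z i) ^ 2 := by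
  simp [Lmat, hx, hatm, mulVec, dotProduct, vecMulVec, Matrix.add_apply,
    Matrix.smul_apply, Matrix.one_apply, Fin.sum_univ_three]
  ring

lemma norm2_pos (x : Fin 3 → ℝ) (hx : x ≠ 0) : 0 < norm2 x := by
  rw [norm2, Real.sqrt_pos]
  obtain ⟨i, hi⟩ : ∃ i, x i ≠ 0 := by
    by_contra h; push_neg at h; exact hx (funext h)
  exact Finset.sum_pos' (fun j _ => sq_nonneg _)
    ⟨i, Finset.mem_univ i, by positivity⟩

lemma norm2_sq (x : Fin 3 → ℝ) : norm2 x ^ 2 = ∑ i, x i ^ 2 :=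
  Real.sq_sqrt (Finset.sum_nonneg fun i _ => sq_nonneg _)

lemma sinc_half_pos {θ : ℝ} (h0 : 0 < θ) (hπ : θ ≤ Real.pi) :
    0 < _root_.sinc (θ / 2) := by
  rw [_root_.sinc, if_neg (by positivity)]
  exact div_pos (Real.sin_pos_of_pos_of_lt_pi (by positivity)
    (by linarith [Real.pi_pos])) (by positivity)

lemma cfun_nonneg {θ : ℝ} (h0 : 0 < θ) (hπ : θ ≤ Real.pi) : 0 ≤ cfun θ := by
  rw [cfun]
  apply div_nonneg _ (sq_nonneg _)
  rw [_root_.sinc, if_neg h0.ne']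
  exact div_nonneg (Real.sin_nonneg_of_nonneg_of_le_pi h0.le hπ) h0.le

lemma cfun_pos {θ : ℝ} (h0 : 0 < θ) (hπ : θ < Real.pi) : 0 < cfun θ := by
  rw [cfun]
  apply div_pos _ (pow_pos (sinc_half_pos h0 hπ.le) 2)
  rw [_root_.sinc, if_neg h0.ne']
  exact div_pos (Real.sin_pos_of_pos_of_lt_pi h0 hπ) h0

/-- positive (semi)definiteness of the transition matrix. -/
theorem transition_matrix_posdef (x z : Fin 3 → ℝ) :
    (norm2 x ≤ Real.pi → 0 ≤ z ⬝ᵥ (Lmat x).mulVec z) ∧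
    (norm2 x < Real.pi → z ≠ 0 → 0 < z ⬝ᵥ (Lmat x).mulVec z) := by
  have hZpos : z ≠ 0 → 0 < ∑ i, z i ^ 2 := by
    intro hz
    obtain ⟨i, hi⟩ : ∃ i, z i ≠ 0 := by
      by_contra h; push_neg at h; exact hz (funext h)
    exact Finset.sum_pos' (fun j _ => sq_nonneg _)
      ⟨i, Finset.mem_univ i, by positivity⟩
  by_cases hx : x = 0
  · have h1 : z ⬝ᵥ (Lmat x).mulVec z = ∑ i, z i ^ 2 := by
      simp [Lmat, hx, mulVec, dotProduct, Matrix.one_apply, Fin.sum_univ_three]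
      ring
    rw [h1]
    exact ⟨fun _ => Finset.sum_nonneg fun i _ => sq_nonneg _,
      fun _ hz => hZpos hz⟩
  · have hr := norm2_pos x hx
    have hq := quad_expand x z hx
    set r := norm2 x with hrdef
    set c := cfun r with hcdef
    set Z := ∑ i, z i ^ 2 with hZdef
    set S := ∑ i, x i * z i with hSdef
    have hCS : S ^ 2 ≤ r ^ 2 * Z := by
      rw [norm2_sq]
      exact Finset.sum_mul_sq_le_sq_mul_sq Finset.univ x z
    have hr2 : (0:ℝ) < r ^ 2 := by positivity
    have hform : z ⬝ᵥ (Lmat x).mulVec z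
        = c * (Z - S ^ 2 / r ^ 2) + S ^ 2 / r ^ 2 := by
      rw [hq]; field_simp; ring
    have hdiff : 0 ≤ Z - S ^ 2 / r ^ 2 := by
      rw [sub_nonneg, div_le_iff₀ hr2]; linarith
    constructor
    · intro hπ
      have hc := cfun_nonneg hr hπ
      rw [hform]
      have : 0 ≤ S ^ 2 / r ^ 2 := by positivity
      nlinarith
    · intro hπ hz
      have hc := cfun_pos hr hπ
      have hZ := hZpos hz
      rw [hform]
      rcases eq_or_lt_of_le (sq_nonneg S) with hS | hS
      · have : S ^ 2 / r ^ 2 = 0 := by rw [← hS]; simp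
        rw [this] at hdiff ⊢
        nlinarith
      · have h1 : 0 < S ^ 2 / r ^ 2 := by positivity
        nlinarith
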